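/- (Koteljanskii's inequality) Let A be an n×n positive semidefinite real symmetric matrix and S, T ⊆ [n]. Then det(A_S)·det(A_T) ≥ det(A_{S∪T})·det(A_{S∩T}), where A_J denotes the principal submatrix indexed by J and the determinant of the empty matrix is 1. -/

import Mathlib

open Matrix Finset

namespace Kotel

variable {n : ℕ}

/-- The submatrix of `A` with rows in `X` and columns in `Y`. -/
noncomputable def pmSub (A : Matrix (Fin n) (Fin n) ℝ) (X Y : Finset (Fin n)) :
    Matrix X Y ℝ :=
  A.submatrix (fun i : X => (i : Fin n)) (fun j : Y => (j : Fin n))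

/-- An equivalence between `J ⊕ K` and `J ∪ K` for disjoint finsets. -/
noncomputable def unionSumEquiv (J K : Finset (Fin n)) (h : Disjoint J K) :
    (J ⊕ K : Type) ≃ ((J ∪ K : Finset (Fin n)) : Type) where
  toFun := Sum.elim (fun x => ⟨x.1, mem_union_left _ x.2⟩)
                    (fun x => ⟨x.1, mem_union_right _ x.2⟩)
  invFun x := if hx : (x : Fin n) ∈ J then Sum.inl ⟨x, hx⟩
              else Sum.inr ⟨x, (mem_union.1 x.2).resolve_left hx⟩
  left_inv := by
    rintro (⟨x, hx⟩ | ⟨x, hx⟩)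
    · simp [hx]
    · simp [disjoint_right.1 h hx]
  right_inv := by
    rintro ⟨x, hx⟩
    by_cases h' : x ∈ J <;> simp [h']

/-- A principal submatrix of a positive definite matrix is positive definite. -/
lemma posDef_pmSub {A : Matrix (Fin n) (Fin n) ℝ} (hA : A.PosDef) (J : Finset (Fin n)) :
    (pmSub A J J).PosDef := by
  classical
  refine Matrix.PosDef.of_dotProduct_mulVec_pos (hA.isHermitian.submatrix _) fun x hx => ?_
  set y : Fin n → ℝ := fun k => if h : k ∈ J then x ⟨k, h⟩ else 0 with hy
  have hyne : y ≠ 0 := by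
    obtain ⟨a, ha⟩ := Function.ne_iff.1 hx
    intro h0
    apply ha
    have := congrFun h0 (a : Fin n)
    simpa [hy, a.2] using this
  have key : x ⬝ᵥ (pmSub A J J) *ᵥ x = y ⬝ᵥ A *ᵥ y := by
    have inner : ∀ k : Fin n, ∑ l, A k l * y l = ∑ l : J, A k l * x l := by
      intro k
      have h1 : ∑ l, A k l * y l = ∑ l ∈ J, A k l * y l :=
        (Finset.sum_subset (Finset.subset_univ J) (fun l _ hl => by simp [hy, hl])).symm
      rw [h1, ← Finset.sum_coe_sort J (fun l => A k l * y l)]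
      refine Finset.sum_congr rfl fun l _ => ?_
      simp [hy, l.2]
    have outer : y ⬝ᵥ A *ᵥ y = ∑ k : J, x k * ∑ l : J, A k l * x l := by
      simp only [dotProduct, mulVec]
      have h2 : ∑ k, y k * ∑ l, A k l * y l = ∑ k ∈ J, y k * ∑ l, A k l * y l :=
        (Finset.sum_subset (Finset.subset_univ J) (fun k _ hk => by simp [hy, hk])).symm
      rw [h2, ← Finset.sum_coe_sort J (fun k => y k * ∑ l, A k l * y l)]
      refine Finset.sum_congr rfl fun k _ => ?_
      rw [inner]
      congr 1
      simp [hy, k.2]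
    rw [outer]
    simp only [dotProduct, mulVec, pmSub, submatrix_apply]
  have := hA.dotProduct_mulVec_pos hyne
  simpa [key] using this

/-- Block decomposition of a principal minor over a disjoint union. -/
lemma pm_union (A : Matrix (Fin n) (Fin n) ℝ) (J K : Finset (Fin n)) (h : Disjoint J K)
    (hJ : IsUnit (pmSub A J J).det) :
    (pmSub A (J ∪ K) (J ∪ K)).det
      = (pmSub A J J).det *
        (pmSub A K K - pmSub A K J * (pmSub A J J)⁻¹ * pmSub A J K).det := by
  haveI := (pmSub A J J).invertibleOfIsUnitDet hJ
  have he : (pmSub A (J ∪ K) (J ∪ K)).submatrix (unionSumEquiv J K h) (unionSumEquiv J K h)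
      = fromBlocks (pmSub A J J) (pmSub A J K) (pmSub A K J) (pmSub A K K) := by
    ext a b
    cases a <;> cases b <;> rfl
  calc (pmSub A (J ∪ K) (J ∪ K)).det
      = ((pmSub A (J ∪ K) (J ∪ K)).submatrix (unionSumEquiv J K h)
          (unionSumEquiv J K h)).det := (det_submatrix_equiv_self _ _).symm
    _ = (fromBlocks (pmSub A J J) (pmSub A J K) (pmSub A K J) (pmSub A K K)).det := by rw [he]
    _ = (pmSub A J J).det *
        (pmSub A K K - pmSub A K J * ⅟(pmSub A J J) * pmSub A J K).det :=
          det_fromBlocks₁₁ _ _ _ _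
    _ = _ := by rw [invOf_eq_nonsing_inv]

/-- Entries of the Schur complement don't depend on the ambient block `K`. -/
lemma schur_entry (A : Matrix (Fin n) (Fin n) ℝ) (J K K' : Finset (Fin n)) (a b : Fin n)
    (ha : a ∈ K) (hb : b ∈ K) (ha' : a ∈ K') (hb' : b ∈ K') :
    (pmSub A K K - pmSub A K J * (pmSub A J J)⁻¹ * pmSub A J K) ⟨a, ha⟩ ⟨b, hb⟩
      = (pmSub A K' K' - pmSub A K' J * (pmSub A J J)⁻¹ * pmSub A J K') ⟨a, ha'⟩ ⟨b, hb'⟩ := by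
  simp [pmSub, Matrix.sub_apply, Matrix.mul_apply, Matrix.submatrix_apply]

/-- Symmetry of the Schur complement. -/
lemma schur_symm {A : Matrix (Fin n) (Fin n) ℝ} (hs : A.IsHermitian)
    (J K : Finset (Fin n)) :
    (pmSub A K K - pmSub A K J * (pmSub A J J)⁻¹ * pmSub A J K)ᵀ
      = pmSub A K K - pmSub A K J * (pmSub A J J)⁻¹ * pmSub A J K := by
  have hsub : ∀ X Y : Finset (Fin n), (pmSub A X Y)ᵀ = pmSub A Y X := by
    intro X Y
    ext a b
    simp only [transpose_apply, pmSub, submatrix_apply]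
    simpa using (hs.apply (b : Fin n) (a : Fin n)).symm
  have hinv : ((pmSub A J J)⁻¹)ᵀ = (pmSub A J J)⁻¹ := by
    rw [transpose_nonsing_inv, hsub]
  rw [transpose_sub, transpose_mul, transpose_mul, hinv, hsub, hsub, hsub, Matrix.mul_assoc]

end Kotel

/-- The principal minor of a square matrix indexed by the subset `S`
(the determinant of the empty matrix being `1`). -/
noncomputable def principalMinor {n : ℕ} (A : Matrix (Fin n) (Fin n) ℝ)
    (S : Finset (Fin n)) : ℝ :=
  (A.submatrix (fun i : S => (i : Fin n)) (fun i : S => (i : Fin n))).det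

namespace Kotel

lemma pm_def (A : Matrix (Fin n) (Fin n) ℝ) (J : Finset (Fin n)) :
    principalMinor A J = (pmSub A J J).det := rfl

lemma pm_pos {A : Matrix (Fin n) (Fin n) ℝ} (hA : A.PosDef) (J : Finset (Fin n)) :
    0 < principalMinor A J :=
  (posDef_pmSub hA J).det_pos

/-- The local (Dodgson-style) inequality for one-step submodularity. -/
lemma pm_local {A : Matrix (Fin n) (Fin n) ℝ} (hA : A.PosDef)
    {i j : Fin n} {J : Finset (Fin n)} (hij : i ≠ j) (hi : i ∉ J) (hj : j ∉ J) :
    principalMinor A (insert i (insert j J)) * principalMinor A J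
      ≤ principalMinor A (insert i J) * principalMinor A (insert j J) := by
  classical
  have hJdet : IsUnit (pmSub A J J).det := (posDef_pmSub hA J).det_pos.ne'.isUnit
  have hdisj2 : Disjoint J ({i, j} : Finset (Fin n)) := by
    simp [Finset.disjoint_insert_right, Finset.disjoint_singleton_right, hi, hj]
  have hdisji : Disjoint J ({i} : Finset (Fin n)) := by simp [hi]
  have hdisjj : Disjoint J ({j} : Finset (Fin n)) := by simp [hj]
  set S2 : Matrix ({i, j} : Finset (Fin n)) ({i, j} : Finset (Fin n)) ℝ :=
    pmSub A ({i, j}) ({i, j}) - pmSub A ({i, j}) J * (pmSub A J J)⁻¹ * pmSub A J ({i, j})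
    with hS2
  have hmemi : i ∈ ({i, j} : Finset (Fin n)) := by simp
  have hmemj : j ∈ ({i, j} : Finset (Fin n)) := by simp
  set sii : ℝ := S2 ⟨i, hmemi⟩ ⟨i, hmemi⟩ with hsii
  set sjj : ℝ := S2 ⟨j, hmemj⟩ ⟨j, hmemj⟩ with hsjj
  set sij : ℝ := S2 ⟨i, hmemi⟩ ⟨j, hmemj⟩ with hsij
  let e2 : Fin 2 ≃ ({i, j} : Finset (Fin n)) :=
    { toFun := ![⟨i, hmemi⟩, ⟨j, hmemj⟩]
      invFun := fun x => if (x : Fin n) = i then 0 else 1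
      left_inv := by
        intro x
        fin_cases x
        · simp
        · simp [hij.symm]
      right_inv := by
        rintro ⟨x, hx⟩
        rcases Finset.mem_insert.1 hx with rfl | hx'
        · simp
        · rw [Finset.mem_singleton] at hx'
          subst hx'
          simp [hij.symm] }
  have hsji : S2 ⟨j, hmemj⟩ ⟨i, hmemi⟩ = sij := by
    have h := schur_symm hA.isHermitian J ({i, j} : Finset (Fin n))
    rw [← hS2] at h
    calc S2 ⟨j, hmemj⟩ ⟨i, hmemi⟩ = S2ᵀ ⟨i, hmemi⟩ ⟨j, hmemj⟩ := rfl
      _ = S2 ⟨i, hmemi⟩ ⟨j, hmemj⟩ := by rw [h]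
  have hdetS2 : S2.det = sii * sjj - sij * sij := by
    have h' : S2.det = (S2.submatrix e2 e2).det := (det_submatrix_equiv_self e2 S2).symm
    rw [h', det_fin_two]
    have h0 : e2 0 = ⟨i, hmemi⟩ := rfl
    have h1 : e2 1 = ⟨j, hmemj⟩ := rfl
    simp [submatrix_apply, h0, h1, ← hsii, ← hsjj, ← hsij, hsji]
  have hunion2 : J ∪ ({i, j} : Finset (Fin n)) = insert i (insert j J) := by
    ext x; simp [or_comm, or_left_comm]
  have hunioni : J ∪ ({i} : Finset (Fin n)) = insert i J := by
    ext x; simp [or_comm]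
  have hunionj : J ∪ ({j} : Finset (Fin n)) = insert j J := by
    ext x; simp [or_comm]
  have hpm2 : principalMinor A (insert i (insert j J)) = principalMinor A J * S2.det := by
    rw [← hunion2, pm_def, pm_def, pm_union A J _ hdisj2 hJdet]
  have det1 : ∀ (a : Fin n) (ha2 : a ∈ ({i, j} : Finset (Fin n))),
      (pmSub A ({a}) ({a}) - pmSub A ({a}) J * (pmSub A J J)⁻¹ * pmSub A J ({a})).det
        = S2 ⟨a, ha2⟩ ⟨a, ha2⟩ := by
    intro a ha2
    haveI : Unique ({a} : Finset (Fin n)) :=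
      { default := ⟨a, Finset.mem_singleton_self a⟩
        uniq := fun x => Subtype.ext (Finset.mem_singleton.1 x.2) }
    rw [det_unique,
      Subsingleton.elim (default : ({a} : Finset (Fin n))) ⟨a, Finset.mem_singleton_self a⟩]
    exact schur_entry A J _ _ a a (Finset.mem_singleton_self a) (Finset.mem_singleton_self a)
      ha2 ha2
  have hpmi : principalMinor A (insert i J) = principalMinor A J * sii := by
    rw [← hunioni, pm_def, pm_def, pm_union A J _ hdisji hJdet, det1 i hmemi]
  have hpmj : principalMinor A (insert j J) = principalMinor A J * sjj := by
    rw [← hunionj, pm_def, pm_def, pm_union A J _ hdisjj hJdet, det1 j hmemj]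
  have hpmJ : 0 < principalMinor A J := pm_pos hA J
  rw [hpm2, hpmi, hpmj, hdetS2]
  nlinarith [sq_nonneg sij, sq_nonneg (principalMinor A J)]

/-- Diminishing returns, disjoint-union form. -/
lemma pm_dimret {A : Matrix (Fin n) (Fin n) ℝ} (hA : A.PosDef) :
    ∀ (D J : Finset (Fin n)) (i : Fin n), i ∉ J → i ∉ D →
      principalMinor A (insert i (J ∪ D)) * principalMinor A J
        ≤ principalMinor A (insert i J) * principalMinor A (J ∪ D) := by
  classical
  intro D
  induction D using Finset.induction_on with
  | empty => intro J i _ _; simp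
  | @insert j D' hjD' ih =>
    intro J i hiJ hiD
    by_cases hjJ : j ∈ J
    · have h' : J ∪ insert j D' = J ∪ D' := by
        rw [Finset.union_insert, Finset.insert_eq_self.2 (Finset.mem_union_left D' hjJ)]
      rw [h']
      exact ih J i hiJ (fun h => hiD (Finset.mem_insert_of_mem h))
    · have hij : i ≠ j := fun h => hiD (h ▸ Finset.mem_insert_self j D')
      have hiD' : i ∉ D' := fun h => hiD (Finset.mem_insert_of_mem h)
      set J' := J ∪ D' with hJ'
      have hiJ' : i ∉ J' := by simp [hJ', hiJ, hiD']
      have hjJ' : j ∉ J' := by simp [hJ', hjJ, hjD']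
      have hL1 := pm_local hA hij hiJ' hjJ'
      have hIH := ih J i hiJ hiD'
      have hrw1 : J ∪ insert j D' = insert j J' := Finset.union_insert j J D'
      rw [hrw1]
      have key : principalMinor A (insert i (insert j J')) * principalMinor A J *
          (principalMinor A J' * principalMinor A (insert i J'))
          ≤ principalMinor A (insert i J) * principalMinor A (insert j J') *
          (principalMinor A J' * principalMinor A (insert i J')) := by
        calc principalMinor A (insert i (insert j J')) * principalMinor A J *
              (principalMinor A J' * principalMinor A (insert i J'))
            = (principalMinor A (insert i (insert j J')) * principalMinor A J') *
              (principalMinor A (insert i J') * principalMinor A J) := by ring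
          _ ≤ (principalMinor A (insert i J') * principalMinor A (insert j J')) *
              (principalMinor A (insert i J) * principalMinor A J') := by
              refine mul_le_mul hL1 hIH ?_ ?_
              · have := pm_pos hA (insert i J')
                have := pm_pos hA J
                positivity
              · have := pm_pos hA (insert i J')
                have := pm_pos hA (insert j J')
                positivity
          _ = principalMinor A (insert i J) * principalMinor A (insert j J') *
              (principalMinor A J' * principalMinor A (insert i J')) := by ring
      have hpos : 0 < principalMinor A J' * principalMinor A (insert i J') := by
        have := pm_pos hA J'
        have := pm_pos hA (insert i J')
        positivity
      exact le_of_mul_le_mul_right key hpos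

/-- Diminishing returns, subset form. -/
lemma pm_dimret' {A : Matrix (Fin n) (Fin n) ℝ} (hA : A.PosDef)
    {J K : Finset (Fin n)} (hJK : J ⊆ K) {i : Fin n} (hiK : i ∉ K) :
    principalMinor A (insert i K) * principalMinor A J
      ≤ principalMinor A (insert i J) * principalMinor A K := by
  classical
  have h := pm_dimret hA (K \ J) J i (fun h => hiK (hJK h))
    (fun h => hiK (Finset.mem_sdiff.1 h).1)
  rwa [Finset.union_sdiff_of_subset hJK] at h

/-- Koteljanskii for positive definite matrices, `B ⊆ S`, `D` added on both sides. -/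
lemma pm_main_pd {A : Matrix (Fin n) (Fin n) ℝ} (hA : A.PosDef) :
    ∀ (D S B : Finset (Fin n)), B ⊆ S → Disjoint D S →
      principalMinor A (S ∪ D) * principalMinor A B
        ≤ principalMinor A S * principalMinor A (B ∪ D) := by
  classical
  intro D
  induction D using Finset.induction_on with
  | empty => intro S B _ _; simp [mul_comm]
  | @insert j D' hjD' ih =>
    intro S B hBS hdisj
    have hjS : j ∉ S := Finset.disjoint_left.1 hdisj (Finset.mem_insert_self j D')
    have hdisj' : Disjoint D' S := (Finset.disjoint_insert_left.1 hdisj).2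
    have hIH := ih S B hBS hdisj'
    have hjD'2 : j ∉ D' := hjD'
    have hjSD' : j ∉ S ∪ D' := by simp [hjS, hjD'2]
    have hsub : B ∪ D' ⊆ S ∪ D' := Finset.union_subset_union hBS (le_refl D')
    have hL2 := pm_dimret' hA hsub hjSD'
    rw [Finset.union_insert, Finset.union_insert]
    -- goal: pm (insert j (S ∪ D')) * pm B ≤ pm S * pm (insert j (B ∪ D'))
    have key : principalMinor A (insert j (S ∪ D')) * principalMinor A B *
        (principalMinor A (B ∪ D') * principalMinor A (S ∪ D'))
        ≤ principalMinor A S * principalMinor A (insert j (B ∪ D')) *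
        (principalMinor A (B ∪ D') * principalMinor A (S ∪ D')) := by
      calc principalMinor A (insert j (S ∪ D')) * principalMinor A B *
            (principalMinor A (B ∪ D') * principalMinor A (S ∪ D'))
          = (principalMinor A (insert j (S ∪ D')) * principalMinor A (B ∪ D')) *
            (principalMinor A (S ∪ D') * principalMinor A B) := by ring
        _ ≤ (principalMinor A (insert j (B ∪ D')) * principalMinor A (S ∪ D')) *
            (principalMinor A S * principalMinor A (B ∪ D')) := by
            refine mul_le_mul hL2 hIH ?_ ?_
            · have := pm_pos hA (S ∪ D')
              have := pm_pos hA B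
              positivity
            · have := pm_pos hA (insert j (B ∪ D'))
              have := pm_pos hA (S ∪ D')
              positivity
        _ = principalMinor A S * principalMinor A (insert j (B ∪ D')) *
            (principalMinor A (B ∪ D') * principalMinor A (S ∪ D')) := by ring
    have hpos : 0 < principalMinor A (B ∪ D') * principalMinor A (S ∪ D') := by
      have := pm_pos hA (B ∪ D')
      have := pm_pos hA (S ∪ D')
      positivity
    exact le_of_mul_le_mul_right key hpos

/-- Koteljanskii's inequality for positive definite matrices. -/
lemma koteljanskii_pd {A : Matrix (Fin n) (Fin n) ℝ} (hA : A.PosDef)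
    (S T : Finset (Fin n)) :
    principalMinor A (S ∪ T) * principalMinor A (S ∩ T)
      ≤ principalMinor A S * principalMinor A T := by
  classical
  have h := pm_main_pd hA (T \ S) S (S ∩ T) (Finset.inter_subset_left)
    (Finset.sdiff_disjoint)
  rwa [Finset.union_sdiff_self_eq_union, show S ∩ T ∪ T \ S = T by
    rw [Finset.inter_comm, Finset.union_comm, Finset.sdiff_union_inter]] at h

end Kotel

theorem koteljanskii_inequality {n : ℕ} (A : Matrix (Fin n) (Fin n) ℝ)
    (hA : A.PosSemidef) (S T : Finset (Fin n)) :
    principalMinor A (S ∪ T) * principalMinor A (S ∩ T)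
      ≤ principalMinor A S * principalMinor A T := by
  classical
  -- perturb: A + ε • 1 is positive definite for ε > 0
  have hPD : ∀ ε : ℝ, 0 < ε → (A + ε • 1).PosDef := by
    intro ε hε
    refine Matrix.PosDef.posSemidef_add hA ?_
    have h1 : (ε • 1 : Matrix (Fin n) (Fin n) ℝ) = Matrix.diagonal (fun _ => ε) := by
      ext a b
      by_cases hab : a = b
      · subst hab; simp
      · simp [Matrix.one_apply, Matrix.diagonal_apply, hab]
    rw [h1]
    exact Matrix.posDef_diagonal_iff.mpr (fun _ => hε)
  set f : ℝ → ℝ := fun ε =>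
    principalMinor (A + ε • 1) S * principalMinor (A + ε • 1) T -
      principalMinor (A + ε • 1) (S ∪ T) * principalMinor (A + ε • 1) (S ∩ T) with hf
  have hcont_pm : ∀ J : Finset (Fin n), Continuous fun ε : ℝ => principalMinor (A + ε • 1) J := by
    intro J
    have heq : ∀ ε : ℝ, principalMinor (A + ε • 1) J
        = (Kotel.pmSub A J J + ε • 1).det := by
      intro ε
      rw [Kotel.pm_def]
      congr 1
      ext a b
      by_cases hab : a = b
      · subst hab; simp [Kotel.pmSub, Matrix.one_apply]
      · have hab' : (a : Fin n) ≠ (b : Fin n) := fun h => hab (Subtype.ext h)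
        simp [Kotel.pmSub, Matrix.one_apply, hab, hab']
    simp only [heq]
    exact Continuous.matrix_det (by continuity)
  have hfc : Continuous f := by
    apply Continuous.sub
    · exact (hcont_pm S).mul (hcont_pm T)
    · exact (hcont_pm (S ∪ T)).mul (hcont_pm (S ∩ T))
  have hfe : ∀ ε ∈ Set.Ioi (0 : ℝ), 0 ≤ f ε := by
    intro ε hε
    have := Kotel.koteljanskii_pd (hPD ε hε) S T
    simp only [hf]
    linarith
  have hlim : Filter.Tendsto f (nhdsWithin 0 (Set.Ioi 0)) (nhds (f 0)) :=
    (hfc.continuousAt).continuousWithinAt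
  have h0 : 0 ≤ f 0 := by
    refine ge_of_tendsto hlim ?_
    filter_upwards [self_mem_nhdsWithin] with ε hε using hfe ε hε
  have hf0 : f 0 = principalMinor A S * principalMinor A T -
      principalMinor A (S ∪ T) * principalMinor A (S ∩ T) := by
    simp [hf]
  rw [hf0] at h0
  linarith
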